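/- Let P be a real symmetric positive definite n×n matrix with positive definite square root R, let B (n×m) and C (m×n) satisfy PB = Cᵀ, let q ∈ ℝᵐ, and let K := {y ∈ ℝⁿ : Cy + q ≥ 0} be nonempty, S := R(K) = {Ry : y ∈ K}, and x ∈ ℝⁿ. Let y* ∈ K be a minimizer of y ↦ ‖x − Ry‖² over K and λ* ∈ ℝᵐ₊ a maximizer of the dual problem λ ↦ −λᵀCBλ − 2(CR⁻¹x + q)ᵀλ − ‖x‖² over λ ≥ 0, related by y* = Bλ* + R⁻¹x. Let (λ_k) ⊆ ℝᵐ₊ be any sequence and set y_k := Bλ_k + R⁻¹x. Then: (i) ‖y_k − y*‖ ≤ ‖B‖‖λ_k − λ*‖ for all k; and (ii) if M := sup_k (‖P‖‖B(λ_k + λ*) + 2R⁻¹x‖ + 2‖Rx‖)‖B‖ is finite, ε, η > 0, and for some index k̄ one has ‖λ_{k̄} − λ*‖ < ε/M and ‖λ_{k̄} − λ*‖ ≤ η/(‖B‖‖R‖), then z := R y_{k̄} satisfies z ∈ S + η𝔹 and ‖x − z‖² < d_S(x)² + ε, i.e., z ∈ proj_S^{ε,η}(x). -/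

import Mathlib

open Metric Set
open scoped Pointwise RealInnerProductSpace

/-- Properties of the primal-dual method for computing ε-η approximate
projections onto `S = R(K)`, `K = {y : Cy + q ≥ 0}`: (i) the primal iterates
`y_k = Bλ_k + R⁻¹x` satisfy `‖y_k − y*‖ ≤ ‖B‖‖λ_k − λ*‖`; (ii) if the dual iterate is close
enough to `λ*`, then `z = Ry_k̄` is an ε-η approximate projection of `x` onto `S`, i.e.
`z ∈ S + η𝔹` and `‖x − z‖² < d_S(x)² + ε`. -/
theorem primalDual_approxProj {n m : ℕ}
    (P R Rinv : EuclideanSpace ℝ (Fin n) →L[ℝ] EuclideanSpace ℝ (Fin n))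
    (B : EuclideanSpace ℝ (Fin m) →L[ℝ] EuclideanSpace ℝ (Fin n))
    (C : EuclideanSpace ℝ (Fin n) →L[ℝ] EuclideanSpace ℝ (Fin m))
    (hPsym : ∀ u v, ⟪P u, v⟫ = ⟪u, P v⟫)
    (hPpos : ∀ v, v ≠ 0 → 0 < ⟪P v, v⟫)
    (hRsym : ∀ u v, ⟪R u, v⟫ = ⟪u, R v⟫)
    (hRpos : ∀ v, v ≠ 0 → 0 < ⟪R v, v⟫)
    (hR2 : R ∘L R = P)
    (hPB : P ∘L B = ContinuousLinearMap.adjoint C)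
    (hRinv₁ : R ∘L Rinv = ContinuousLinearMap.id ℝ _)
    (hRinv₂ : Rinv ∘L R = ContinuousLinearMap.id ℝ _)
    (q : EuclideanSpace ℝ (Fin m)) (x : EuclideanSpace ℝ (Fin n))
    -- the feasible set K and the constraint set S = R(K)
    (K : Set (EuclideanSpace ℝ (Fin n)))
    (hKdef : K = {y | ∀ i : Fin m, 0 ≤ C y i + q i}) (hKne : K.Nonempty)
    (S : Set (EuclideanSpace ℝ (Fin n))) (hSdef : S = R '' K)
    -- the primal solution y*
    (ystar : EuclideanSpace ℝ (Fin n)) (hystarK : ystar ∈ K)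
    (hystarmin : ∀ y ∈ K, ‖x - R ystar‖ ^ 2 ≤ ‖x - R y‖ ^ 2)
    -- the dual solution λ*
    (lamstar : EuclideanSpace ℝ (Fin m)) (hlamstarpos : ∀ i, 0 ≤ lamstar i)
    (hlamstarmax : ∀ lam : EuclideanSpace ℝ (Fin m), (∀ i, 0 ≤ lam i) →
      -⟪lam, C (B lam)⟫ - 2 * ⟪C (Rinv x) + q, lam⟫ - ‖x‖ ^ 2 ≤
        -⟪lamstar, C (B lamstar)⟫ - 2 * ⟪C (Rinv x) + q, lamstar⟫ - ‖x‖ ^ 2)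
    -- the KKT relation
    (hKKT : ystar = B lamstar + Rinv x)
    -- the dual sequence
    (lam : ℕ → EuclideanSpace ℝ (Fin m)) (hlampos : ∀ k, ∀ i, 0 ≤ lam k i)
    -- M := sup_k (‖P‖‖B(λ_k + λ*) + 2R⁻¹x‖ + 2‖Rx‖)‖B‖ is finite
    (g : ℕ → ℝ)
    (hg : ∀ k, g k = (‖P‖ * ‖B (lam k + lamstar) + (2 : ℝ) • Rinv x‖ + 2 * ‖R x‖) * ‖B‖)
    (hBdd : BddAbove (Set.range g)) :
    (∀ k : ℕ, ‖(B (lam k) + Rinv x) - ystar‖ ≤ ‖B‖ * ‖lam k - lamstar‖) ∧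
    (∀ ε η : ℝ, 0 < ε → 0 < η → ∀ kbar : ℕ,
      ‖lam kbar - lamstar‖ < ε / (⨆ k, g k) →
      ‖lam kbar - lamstar‖ ≤ η / (‖B‖ * ‖R‖) →
      R (B (lam kbar) + Rinv x) ∈ S + η • closedBall (0 : EuclideanSpace ℝ (Fin n)) 1 ∧
      ‖x - R (B (lam kbar) + Rinv x)‖ ^ 2 < infDist x S ^ 2 + ε) := by
  -- part (i)
  have part1 : ∀ k : ℕ, ‖(B (lam k) + Rinv x) - ystar‖ ≤ ‖B‖ * ‖lam k - lamstar‖ := by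
    intro k
    have h : (B (lam k) + Rinv x) - ystar = B (lam k - lamstar) := by
      rw [hKKT, map_sub]; abel
    rw [h]
    exact B.le_opNorm _
  refine ⟨part1, ?_⟩
  intro ε η hε hη kbar h1 h2
  set yk := B (lam kbar) + Rinv x with hyk
  clear_value yk
  have hSne : S.Nonempty := by
    rw [hSdef]; exact hKne.image _
  have hRyS : R ystar ∈ S := by rw [hSdef]; exact ⟨ystar, hystarK, rfl⟩
  -- infDist x S = ‖x - R ystar‖
  have hinf : infDist x S = ‖x - R ystar‖ := by
    apply le_antisymm
    · simpa [dist_eq_norm] using infDist_le_dist_of_mem hRyS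
    · by_contra hlt
      push_neg at hlt
      obtain ⟨s, hs, hds⟩ := (infDist_lt_iff hSne).mp hlt
      rw [hSdef] at hs
      obtain ⟨y, hy, rfl⟩ := hs
      have := hystarmin y hy
      rw [dist_eq_norm] at hds
      nlinarith [norm_nonneg (x - R ystar), norm_nonneg (x - R y)]
  -- the distance bound ‖yk - ystar‖ ≤ ‖B‖ * ‖λ - λ*‖
  have hdy : ‖yk - ystar‖ ≤ ‖B‖ * ‖lam kbar - lamstar‖ := by
    rw [hyk]; exact part1 kbar
  constructor
  · -- membership
    have hzb : ‖R yk - R ystar‖ ≤ η := by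
      have h3 : ‖R yk - R ystar‖ ≤ ‖R‖ * (‖B‖ * ‖lam kbar - lamstar‖) := by
        calc ‖R yk - R ystar‖ = ‖R (yk - ystar)‖ := by rw [map_sub]
        _ ≤ ‖R‖ * ‖yk - ystar‖ := R.le_opNorm _
        _ ≤ ‖R‖ * (‖B‖ * ‖lam kbar - lamstar‖) :=
            mul_le_mul_of_nonneg_left hdy (norm_nonneg _)
      rcases le_or_gt (‖B‖ * ‖R‖) 0 with hc | hc
      · have hc0 : ‖B‖ * ‖R‖ = 0 :=
          le_antisymm hc (mul_nonneg (norm_nonneg _) (norm_nonneg _))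
        have : ‖R‖ * (‖B‖ * ‖lam kbar - lamstar‖) = 0 := by
          rcases mul_eq_zero.mp hc0 with h | h <;> rw [h] <;> ring
        linarith
      · have := (le_div_iff₀ hc).mp h2
        calc ‖R yk - R ystar‖ ≤ ‖R‖ * (‖B‖ * ‖lam kbar - lamstar‖) := h3
          _ = ‖lam kbar - lamstar‖ * (‖B‖ * ‖R‖) := by ring
          _ ≤ η := this
    have : R yk = R ystar + (R yk - R ystar) := by abel
    rw [this]
    apply Set.add_mem_add hRyS
    rw [_root_.smul_closedBall _ _ zero_le_one, smul_zero, Real.norm_of_nonneg hη.le, mul_one]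
    exact mem_closedBall_zero_iff.mpr hzb
  · -- distance inequality
    rw [hinf]
    -- key identity
    have hPpt : ∀ v, R (R v) = P v := fun v => by
      rw [← hR2]; rfl
    have hkey : ‖x - R yk‖ ^ 2 - ‖x - R ystar‖ ^ 2
        = ⟪yk - ystar, P (yk + ystar) - (2 : ℝ) • R x⟫ := by
      have e1 : ‖R yk‖ ^ 2 = ⟪yk, P yk⟫ := by
        rw [← real_inner_self_eq_norm_sq, hRsym, hPpt]
      have e2 : ‖R ystar‖ ^ 2 = ⟪ystar, P ystar⟫ := by
        rw [← real_inner_self_eq_norm_sq, hRsym, hPpt]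
      have e3 : ⟪x, R yk⟫ = ⟪yk, R x⟫ := by
        rw [← hRsym, real_inner_comm]
      have e4 : ⟪x, R ystar⟫ = ⟪ystar, R x⟫ := by
        rw [← hRsym, real_inner_comm]
      have e5 : ⟪ystar, P yk⟫ = ⟪yk, P ystar⟫ := by
        rw [← hPsym, real_inner_comm]
      rw [norm_sub_sq_real, norm_sub_sq_real, e1, e2, e3, e4]
      rw [inner_sub_left, inner_sub_right, inner_sub_right, map_add,
        inner_add_right, inner_add_right, inner_smul_right, inner_smul_right, e5]
      ring
    have hsum : yk + ystar = B (lam kbar + lamstar) + (2 : ℝ) • Rinv x := by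
      rw [hyk, hKKT, map_add, two_smul]; abel
    -- Cauchy-Schwarz bound
    have hCS : ⟪yk - ystar, P (yk + ystar) - (2 : ℝ) • R x⟫
        ≤ ‖lam kbar - lamstar‖ * g kbar := by
      calc ⟪yk - ystar, P (yk + ystar) - (2 : ℝ) • R x⟫
          ≤ ‖yk - ystar‖ * ‖P (yk + ystar) - (2 : ℝ) • R x‖ := real_inner_le_norm _ _
        _ ≤ (‖B‖ * ‖lam kbar - lamstar‖) *
            (‖P‖ * ‖B (lam kbar + lamstar) + (2 : ℝ) • Rinv x‖ + 2 * ‖R x‖) := by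
            apply mul_le_mul hdy _ (norm_nonneg _)
              (mul_nonneg (norm_nonneg _) (norm_nonneg _))
            calc ‖P (yk + ystar) - (2 : ℝ) • R x‖
                ≤ ‖P (yk + ystar)‖ + ‖(2 : ℝ) • R x‖ := norm_sub_le _ _
              _ ≤ ‖P‖ * ‖yk + ystar‖ + 2 * ‖R x‖ := by
                  rw [norm_smul, Real.norm_ofNat]
                  exact add_le_add_left (P.le_opNorm _) _
              _ = ‖P‖ * ‖B (lam kbar + lamstar) + (2 : ℝ) • Rinv x‖ + 2 * ‖R x‖ := by
                  rw [hsum]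
        _ = ‖lam kbar - lamstar‖ * g kbar := by rw [hg]; ring
    have hgle : g kbar ≤ ⨆ k, g k := le_ciSup hBdd kbar
    have hg0 : 0 ≤ g kbar := by
      rw [hg]
      exact mul_nonneg (add_nonneg (mul_nonneg (norm_nonneg _) (norm_nonneg _))
        (mul_nonneg two_pos.le (norm_nonneg _))) (norm_nonneg _)
    have hfin : ‖lam kbar - lamstar‖ * g kbar < ε := by
      rcases le_or_gt (⨆ k, g k) 0 with hs | hs
      · have : g kbar = 0 := le_antisymm (hgle.trans hs) hg0
        rw [this, mul_zero]; exact hε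
      · calc ‖lam kbar - lamstar‖ * g kbar ≤ ‖lam kbar - lamstar‖ * ⨆ k, g k :=
            mul_le_mul_of_nonneg_left hgle (norm_nonneg _)
          _ < ε := by
            have := (lt_div_iff₀ hs).mp h1
            linarith
    linarith [hkey, hCS, hfin]
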